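/- Let n ≥ 1. For every tournament T on n vertices there exist a positive integer k with k ≤ n + 1 and a set of n dice, each with k sides, that realizes T. Concretely: there exist k ≤ n + 1 and a function X : Fin n → Fin k → ℕ such that for all distinct i, j in Fin n, T has an edge from i to j if and only if the number of pairs (a, b) ∈ Fin k × Fin k with X i a > X j b is strictly greater than k²/2. -/

import Mathlib

/-- The number of face wins of die `D` over die `E`: the number of pairs `(a, b)`
of faces with `D a > E b`. -/
def faceWins (k : ℕ) (D E : Fin k → ℕ) : ℕ :=
  (Finset.univ.filter (fun p : Fin k × Fin k => D p.1 > E p.2)).card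

namespace DiceTournament

noncomputable section
open Classical

def cnt (M : List ℕ) (v : ℕ) : ℕ := (M.map (fun w => if w < v then 1 else 0)).sum

def NL (L M : List ℕ) : ℕ := (L.map (cnt M)).sum

def Rng (b l : ℕ) : List ℕ := (List.range l).map (fun i => b + 1 + i)

lemma cnt_cons (a : ℕ) (M : List ℕ) (v : ℕ) :
    cnt (a :: M) v = (if a < v then 1 else 0) + cnt M v := by simp [cnt]

lemma cnt_append (A B : List ℕ) (v : ℕ) : cnt (A ++ B) v = cnt A v + cnt B v := by
  simp [cnt]

lemma sum_map_const {α : Type*} (l : List α) (f : α → ℕ) (C : ℕ)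
    (h : ∀ x ∈ l, f x = C) : (l.map f).sum = l.length * C := by
  induction l with
  | nil => simp
  | cons a t ih =>
      simp only [List.map_cons, List.sum_cons, List.length_cons,
        h a (List.mem_cons_self : a ∈ a :: t), ih (fun x hx => h x (List.mem_cons_of_mem a hx))]
      ring

lemma cnt_zero {M : List ℕ} {v : ℕ} (h : ∀ w ∈ M, v ≤ w) : cnt M v = 0 := by
  have := sum_map_const M (fun w => if w < v then 1 else 0) 0
    (fun x hx => by simp [Nat.not_lt.mpr (h x hx)])
  simpa [cnt] using this

lemma cnt_len {M : List ℕ} {v : ℕ} (h : ∀ w ∈ M, w < v) : cnt M v = M.length := by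
  have := sum_map_const M (fun w => if w < v then 1 else 0) 1
    (fun x hx => by simp [h x hx])
  simpa [cnt] using this

lemma NL_cons (a : ℕ) (A M : List ℕ) : NL (a :: A) M = cnt M a + NL A M := by simp [NL]

lemma NL_append (A B M : List ℕ) : NL (A ++ B) M = NL A M + NL B M := by simp [NL]

lemma NL_const {A M : List ℕ} {C : ℕ} (h : ∀ v ∈ A, cnt M v = C) :
    NL A M = A.length * C := sum_map_const A (cnt M) C h

lemma length_Rng (b l : ℕ) : (Rng b l).length = l := by simp [Rng]

lemma mem_Rng {w b l : ℕ} (h : w ∈ Rng b l) : b + 1 ≤ w ∧ w ≤ b + l := by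
  simp only [Rng, List.mem_map, List.mem_range] at h
  obtain ⟨i, hi, rfl⟩ := h; omega

lemma cnt_Rng_lo {b l v : ℕ} (h : v ≤ b + 1) : cnt (Rng b l) v = 0 :=
  cnt_zero (fun w hw => le_trans h (mem_Rng hw).1)

lemma cnt_Rng_hi {b l v : ℕ} (h : b + l < v) : cnt (Rng b l) v = l := by
  rw [cnt_len (fun w hw => lt_of_le_of_lt (mem_Rng hw).2 h), length_Rng]

lemma cnt_shift_lo {lx : List ℕ} {S v : ℕ} (h : v ≤ S) :
    cnt (lx.map (fun w => S + w)) v = 0 := by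
  apply cnt_zero; intro w hw
  obtain ⟨w', _, rfl⟩ := List.mem_map.mp hw; omega

lemma cnt_shift_hi {lx : List ℕ} {S Mx v : ℕ} (hb : ∀ w ∈ lx, w ≤ Mx) (h : S + Mx < v) :
    cnt (lx.map (fun w => S + w)) v = lx.length := by
  rw [cnt_len, List.length_map]
  intro w hw; obtain ⟨w', hw', rfl⟩ := List.mem_map.mp hw
  have := hb w' hw'; omega

lemma cnt_shift_inner (lx : List ℕ) (S v : ℕ) :
    cnt (lx.map (fun w => S + w)) (S + v) = cnt lx v := by
  unfold cnt; rw [List.map_map]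
  congr 1
  apply List.map_congr_left
  intro w _
  simp only [Function.comp_apply, Nat.add_lt_add_iff_left]

lemma sum_map_one_add (l : List ℕ) (h : ℕ → ℕ) :
    (l.map (fun w => 1 + h w)).sum = l.length + (l.map h).sum := by
  induction l with
  | nil => simp
  | cons a t ih => simp [ih]; omega

lemma cnt_ofFn {k : ℕ} (E : Fin k → ℕ) (v : ℕ) :
    cnt (List.ofFn E) v = ∑ b, if E b < v then 1 else 0 := by
  unfold cnt; rw [List.map_ofFn, List.sum_ofFn]; rfl

lemma faceWins_eq (k : ℕ) (D E : Fin k → ℕ) :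
    faceWins k D E = NL (List.ofFn D) (List.ofFn E) := by
  unfold faceWins NL
  rw [Finset.card_filter, Fintype.sum_prod_type, List.map_ofFn, List.sum_ofFn]
  apply Finset.sum_congr rfl
  intro a _
  simp only [Function.comp_apply, cnt_ofFn]

lemma ofFn_getElem {L : List ℕ} {k : ℕ} (h : L.length = k) :
    List.ofFn (fun a : Fin k => L[a.val]'(by omega)) = L := by
  apply List.ext_getElem (by simp [h])
  intro i h1 h2
  simp [List.getElem_ofFn]

end
end DiceTournament

-- appended to aux.lean content for testing
namespace DiceTournament
noncomputable section
open Classical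

def SV (n m : ℕ) : ℕ := 32*n + 2*m + 11
def HV (n m Mx : ℕ) : ℕ := SV n m + Mx + 1
def ZV (n m Mx : ℕ) : ℕ := HV n m Mx + 32*n + 8
def tV (n K : ℕ) : ℕ := 32*n - 8*K
def TtV (n m Mx K : ℕ) : ℕ := HV n m Mx + 8*K + 8
def DuL (n m Mx : ℕ) : List ℕ :=
  (24*n+4) :: (Rng (32*n + 9 + m) (m+1) ++ (HV n m Mx + 24*n + 4) :: Rng (ZV n m Mx + m + 1) m)
def DvL (n m Mx : ℕ) : List ℕ :=
  (16*n+4) :: (Rng (32*n+8) (m+1) ++ Rng (ZV n m Mx) (m+1))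
def EpL (n m Mx K : ℕ) (lx : List ℕ) : List ℕ :=
  tV n K :: TtV n m Mx K :: lx.map (fun w => SV n m + w)

lemma length_EpL (n m Mx K : ℕ) (lx : List ℕ) : (EpL n m Mx K lx).length = lx.length + 2 := by
  simp [EpL]

lemma length_DuL (n m Mx : ℕ) : (DuL n m Mx).length = 2*m+3 := by
  simp [DuL, length_Rng]; omega

lemma length_DvL (n m Mx : ℕ) : (DvL n m Mx).length = 2*m+3 := by
  simp [DvL, length_Rng]; omega

section Lemmas
variable (n m Mx K : ℕ) (lx : List ℕ)

/-- L1 -/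
lemma NL_Du_Ep (hK : K < 4*n) (hlx : lx.length = 2*m+1) (hMx : ∀ w ∈ lx, w ≤ Mx) :
    NL (DuL n m Mx) (EpL n m Mx K lx) =
      2*(m*m) + 6*m + 3 + ((if n ≤ K then 1 else 0) + (if K < 3*n then 1 else 0)) := by
  have e1 : cnt (EpL n m Mx K lx) (24*n+4) = (if n ≤ K then 1 else 0) := by
    unfold EpL
    rw [cnt_cons, cnt_cons, cnt_shift_lo (show 24*n+4 ≤ SV n m by unfold SV; omega),
        if_neg (show ¬ TtV n m Mx K < 24*n+4 by unfold TtV HV SV; omega),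
        if_congr (show (tV n K < 24*n+4) ↔ (n ≤ K) by unfold tV; omega) rfl rfl]
    omega
  have c2 : ∀ v ∈ Rng (32*n + 9 + m) (m+1), cnt (EpL n m Mx K lx) v = 1 := by
    intro v hv
    obtain ⟨hv1, hv2⟩ := mem_Rng hv
    unfold EpL
    rw [cnt_cons, cnt_cons, cnt_shift_lo (show v ≤ SV n m by unfold SV; omega),
        if_pos (show tV n K < v by unfold tV; omega),
        if_neg (show ¬ TtV n m Mx K < v by unfold TtV HV SV; omega)]
  have e3 : cnt (EpL n m Mx K lx) (HV n m Mx + 24*n + 4)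
      = 1 + (if K < 3*n then 1 else 0) + (2*m+1) := by
    unfold EpL
    rw [cnt_cons, cnt_cons, cnt_shift_hi hMx (show SV n m + Mx < HV n m Mx + 24*n+4 by unfold HV; omega),
        if_pos (show tV n K < HV n m Mx + 24*n+4 by unfold tV HV SV; omega),
        if_congr (show (TtV n m Mx K < HV n m Mx + 24*n+4) ↔ (K < 3*n) by unfold TtV; omega) rfl rfl,
        hlx]
    omega
  have c4 : ∀ v ∈ Rng (ZV n m Mx + m + 1) m, cnt (EpL n m Mx K lx) v = 2*m+3 := by
    intro v hv
    obtain ⟨hv1, hv2⟩ := mem_Rng hv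
    unfold EpL
    rw [cnt_cons, cnt_cons,
        cnt_shift_hi hMx (show SV n m + Mx < v by unfold ZV HV at hv1; omega),
        if_pos (show tV n K < v by unfold tV ZV HV SV at *; omega),
        if_pos (show TtV n m Mx K < v by unfold TtV ZV HV at *; omega), hlx]
    omega
  unfold DuL
  rw [NL_cons, NL_append, NL_cons, e1, e3, NL_const c2, NL_const c4, length_Rng, length_Rng]
  have hp : (m+1) * 1 + m * (2*m+3) = 2*(m*m) + 4*m + 1 := by ring
  omega

/-- L2 -/
lemma NL_Ep_Du (hK : K < 4*n) (hlx : lx.length = 2*m+1) (hMx : ∀ w ∈ lx, w ≤ Mx) :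
    NL (EpL n m Mx K lx) (DuL n m Mx)
      + ((if n ≤ K then 1 else 0) + (if K < 3*n then 1 else 0)) = 2*(m*m) + 6*m + 6 := by
  have f1 : cnt (DuL n m Mx) (tV n K) + (if n ≤ K then 1 else 0) = 1 := by
    unfold DuL
    rw [cnt_cons, cnt_append, cnt_cons,
        cnt_Rng_lo (show tV n K ≤ 32*n+9+m+1 by unfold tV; omega),
        cnt_Rng_lo (show tV n K ≤ ZV n m Mx + m+1+1 by unfold tV ZV HV SV; omega),
        if_neg (show ¬ HV n m Mx + 24*n+4 < tV n K by unfold tV HV SV; omega),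
        if_congr (show (24*n+4 < tV n K) ↔ ¬ (n ≤ K) by unfold tV; omega) rfl rfl]
    by_cases hc : n ≤ K <;> simp [hc]
  have f2 : cnt (DuL n m Mx) (TtV n m Mx K) + (if K < 3*n then 1 else 0) = m+3 := by
    unfold DuL
    rw [cnt_cons, cnt_append, cnt_cons,
        cnt_Rng_hi (show 32*n+9+m + (m+1) < TtV n m Mx K by unfold TtV HV SV; omega),
        cnt_Rng_lo (show TtV n m Mx K ≤ ZV n m Mx + m+1+1 by unfold TtV ZV; omega),
        if_pos (show 24*n+4 < TtV n m Mx K by unfold TtV HV SV; omega),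
        if_congr (show (HV n m Mx + 24*n+4 < TtV n m Mx K) ↔ ¬ (K < 3*n) by unfold TtV; omega) rfl rfl]
    by_cases hc : K < 3*n <;> simp [hc] <;> omega
  have f3 : NL (lx.map (fun w => SV n m + w)) (DuL n m Mx) = (2*m+1) * (m+2) := by
    have h : ∀ v ∈ lx.map (fun w => SV n m + w), cnt (DuL n m Mx) v = m+2 := by
      intro v hv
      obtain ⟨w, hw, rfl⟩ := List.mem_map.mp hv
      have hwM := hMx w hw
      unfold DuL
      rw [cnt_cons, cnt_append, cnt_cons,
          cnt_Rng_hi (show 32*n+9+m + (m+1) < SV n m + w by unfold SV; omega),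
          cnt_Rng_lo (show SV n m + w ≤ ZV n m Mx + m+1+1 by unfold ZV HV; omega),
          if_pos (show 24*n+4 < SV n m + w by unfold SV; omega),
          if_neg (show ¬ HV n m Mx + 24*n+4 < SV n m + w by unfold HV; omega)]
      omega
    rw [NL_const h, List.length_map, hlx]
  unfold EpL
  rw [NL_cons, NL_cons, f3]
  have hp : (2*m+1) * (m+2) = 2*(m*m)+5*m+2 := by ring
  omega

/-- L3 -/
lemma NL_Dv_Ep (hK : K < 4*n) (hlx : lx.length = 2*m+1) (hMx : ∀ w ∈ lx, w ≤ Mx) :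
    NL (DvL n m Mx) (EpL n m Mx K lx) = 2*(m*m) + 6*m + 4 + (if 2*n ≤ K then 1 else 0) := by
  have e1 : cnt (EpL n m Mx K lx) (16*n+4) = (if 2*n ≤ K then 1 else 0) := by
    unfold EpL
    rw [cnt_cons, cnt_cons, cnt_shift_lo (show 16*n+4 ≤ SV n m by unfold SV; omega),
        if_neg (show ¬ TtV n m Mx K < 16*n+4 by unfold TtV HV SV; omega),
        if_congr (show (tV n K < 16*n+4) ↔ (2*n ≤ K) by unfold tV; omega) rfl rfl]
    omega
  have c2 : ∀ v ∈ Rng (32*n+8) (m+1), cnt (EpL n m Mx K lx) v = 1 := by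
    intro v hv
    obtain ⟨hv1, hv2⟩ := mem_Rng hv
    unfold EpL
    rw [cnt_cons, cnt_cons, cnt_shift_lo (show v ≤ SV n m by unfold SV; omega),
        if_pos (show tV n K < v by unfold tV; omega),
        if_neg (show ¬ TtV n m Mx K < v by unfold TtV HV SV; omega)]
  have c3 : ∀ v ∈ Rng (ZV n m Mx) (m+1), cnt (EpL n m Mx K lx) v = 2*m+3 := by
    intro v hv
    obtain ⟨hv1, hv2⟩ := mem_Rng hv
    unfold EpL
    rw [cnt_cons, cnt_cons,
        cnt_shift_hi hMx (show SV n m + Mx < v by unfold ZV HV at hv1; omega),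
        if_pos (show tV n K < v by unfold tV ZV HV SV at *; omega),
        if_pos (show TtV n m Mx K < v by unfold TtV ZV HV at *; omega), hlx]
    omega
  unfold DvL
  rw [NL_cons, NL_append, e1, NL_const c2, NL_const c3, length_Rng, length_Rng]
  have hp : (m+1) * (2*m+3) = 2*(m*m)+5*m+3 := by ring
  omega

/-- L4 -/
lemma NL_Ep_Dv (hK : K < 4*n) (hlx : lx.length = 2*m+1) (hMx : ∀ w ∈ lx, w ≤ Mx) :
    NL (EpL n m Mx K lx) (DvL n m Mx) + (if 2*n ≤ K then 1 else 0) = 2*(m*m) + 6*m + 5 := by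
  have f1 : cnt (DvL n m Mx) (tV n K) + (if 2*n ≤ K then 1 else 0) = 1 := by
    unfold DvL
    rw [cnt_cons, cnt_append,
        cnt_Rng_lo (show tV n K ≤ 32*n+8+1 by unfold tV; omega),
        cnt_Rng_lo (show tV n K ≤ ZV n m Mx + 1 by unfold tV ZV HV SV; omega),
        if_congr (show (16*n+4 < tV n K) ↔ ¬ (2*n ≤ K) by unfold tV; omega) rfl rfl]
    by_cases hc : 2*n ≤ K <;> simp [hc]
  have f2 : cnt (DvL n m Mx) (TtV n m Mx K) = m+2 := by
    unfold DvL
    rw [cnt_cons, cnt_append,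
        cnt_Rng_hi (show 32*n+8 + (m+1) < TtV n m Mx K by unfold TtV HV SV; omega),
        cnt_Rng_lo (show TtV n m Mx K ≤ ZV n m Mx + 1 by unfold TtV ZV; omega),
        if_pos (show 16*n+4 < TtV n m Mx K by unfold TtV HV SV; omega)]
    omega
  have f3 : NL (lx.map (fun w => SV n m + w)) (DvL n m Mx) = (2*m+1) * (m+2) := by
    have h : ∀ v ∈ lx.map (fun w => SV n m + w), cnt (DvL n m Mx) v = m+2 := by
      intro v hv
      obtain ⟨w, hw, rfl⟩ := List.mem_map.mp hv
      have hwM := hMx w hw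
      unfold DvL
      rw [cnt_cons, cnt_append,
          cnt_Rng_hi (show 32*n+8 + (m+1) < SV n m + w by unfold SV; omega),
          cnt_Rng_lo (show SV n m + w ≤ ZV n m Mx + 1 by unfold ZV HV; omega),
          if_pos (show 16*n+4 < SV n m + w by unfold SV; omega)]
      omega
    rw [NL_const h, List.length_map, hlx]
  unfold EpL
  rw [NL_cons, NL_cons, f2, f3]
  have hp : (2*m+1) * (m+2) = 2*(m*m)+5*m+2 := by ring
  omega

/-- L5 -/
lemma NL_Du_Dv (hn : 1 ≤ n) :
    NL (DuL n m Mx) (DvL n m Mx) = 3*(m*m) + 7*m + 5 := by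
  have e1 : cnt (DvL n m Mx) (24*n+4) = 1 := by
    unfold DvL
    rw [cnt_cons, cnt_append,
        cnt_Rng_lo (show 24*n+4 ≤ 32*n+8+1 by omega),
        cnt_Rng_lo (show 24*n+4 ≤ ZV n m Mx + 1 by unfold ZV HV SV; omega),
        if_pos (show 16*n+4 < 24*n+4 by omega)]
  have c2 : ∀ v ∈ Rng (32*n+9+m) (m+1), cnt (DvL n m Mx) v = m+2 := by
    intro v hv
    obtain ⟨hv1, hv2⟩ := mem_Rng hv
    unfold DvL
    rw [cnt_cons, cnt_append,
        cnt_Rng_hi (show 32*n+8 + (m+1) < v by omega),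
        cnt_Rng_lo (show v ≤ ZV n m Mx + 1 by unfold ZV HV SV at *; omega),
        if_pos (show 16*n+4 < v by omega)]
    omega
  have e3 : cnt (DvL n m Mx) (HV n m Mx + 24*n+4) = m+2 := by
    unfold DvL
    rw [cnt_cons, cnt_append,
        cnt_Rng_hi (show 32*n+8 + (m+1) < HV n m Mx + 24*n+4 by unfold HV SV; omega),
        cnt_Rng_lo (show HV n m Mx + 24*n+4 ≤ ZV n m Mx + 1 by unfold ZV; omega),
        if_pos (show 16*n+4 < HV n m Mx + 24*n+4 by unfold HV SV; omega)]
    omega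
  have c4 : ∀ v ∈ Rng (ZV n m Mx + m + 1) m, cnt (DvL n m Mx) v = 2*m+3 := by
    intro v hv
    obtain ⟨hv1, hv2⟩ := mem_Rng hv
    unfold DvL
    rw [cnt_cons, cnt_append,
        cnt_Rng_hi (show 32*n+8 + (m+1) < v by unfold ZV HV SV at hv1; omega),
        cnt_Rng_hi (show ZV n m Mx + (m+1) < v by omega),
        if_pos (show 16*n+4 < v by unfold ZV HV SV at hv1; omega)]
    omega
  unfold DuL
  rw [NL_cons, NL_append, NL_cons, e1, e3, NL_const c2, NL_const c4, length_Rng, length_Rng]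
  have hp1 : (m+1) * (m+2) = m*m + 3*m + 2 := by ring
  have hp2 : m * (2*m+3) = 2*(m*m) + 3*m := by ring
  omega

/-- L6 -/
lemma NL_Dv_Du (hn : 1 ≤ n) :
    NL (DvL n m Mx) (DuL n m Mx) = (m*m) + 5*m + 4 := by
  have e1 : cnt (DuL n m Mx) (16*n+4) = 0 := by
    unfold DuL
    rw [cnt_cons, cnt_append, cnt_cons,
        cnt_Rng_lo (show 16*n+4 ≤ 32*n+9+m+1 by omega),
        cnt_Rng_lo (show 16*n+4 ≤ ZV n m Mx + m+1+1 by unfold ZV HV SV; omega),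
        if_neg (show ¬ 24*n+4 < 16*n+4 by omega),
        if_neg (show ¬ HV n m Mx + 24*n+4 < 16*n+4 by unfold HV SV; omega)]
  have c2 : ∀ v ∈ Rng (32*n+8) (m+1), cnt (DuL n m Mx) v = 1 := by
    intro v hv
    obtain ⟨hv1, hv2⟩ := mem_Rng hv
    unfold DuL
    rw [cnt_cons, cnt_append, cnt_cons,
        cnt_Rng_lo (show v ≤ 32*n+9+m+1 by omega),
        cnt_Rng_lo (show v ≤ ZV n m Mx + m+1+1 by unfold ZV HV SV; omega),
        if_pos (show 24*n+4 < v by omega),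
        if_neg (show ¬ HV n m Mx + 24*n+4 < v by unfold HV SV; omega)]
  have c3 : ∀ v ∈ Rng (ZV n m Mx) (m+1), cnt (DuL n m Mx) v = m+3 := by
    intro v hv
    obtain ⟨hv1, hv2⟩ := mem_Rng hv
    unfold DuL
    rw [cnt_cons, cnt_append, cnt_cons,
        cnt_Rng_hi (show 32*n+9+m + (m+1) < v by unfold ZV HV SV at hv1; omega),
        cnt_Rng_lo (show v ≤ ZV n m Mx + m+1+1 by omega),
        if_pos (show 24*n+4 < v by unfold ZV HV SV at hv1; omega),
        if_pos (show HV n m Mx + 24*n+4 < v by unfold ZV at hv1; omega)]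
    omega
  unfold DvL
  rw [NL_cons, NL_append, e1, NL_const c2, NL_const c3, length_Rng, length_Rng]
  have hp : (m+1) * (m+3) = m*m + 4*m + 3 := by ring
  omega

/-- L7 -/
lemma NL_Ep_Ep (K2 : ℕ) (lx2 : List ℕ) (hK : K < 4*n) (hK2 : K2 < 4*n) (hne : K ≠ K2)
    (hlx : lx.length = 2*m+1) (hlx2 : lx2.length = 2*m+1)
    (hMx : ∀ w ∈ lx, w ≤ Mx) (hMx2 : ∀ w ∈ lx2, w ≤ Mx) :
    NL (EpL n m Mx K lx) (EpL n m Mx K2 lx2) = NL lx lx2 + (4*m+4) := by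
  have f1 : cnt (EpL n m Mx K2 lx2) (tV n K) = (if K < K2 then 1 else 0) := by
    unfold EpL
    rw [cnt_cons, cnt_cons, cnt_shift_lo (show tV n K ≤ SV n m by unfold tV SV; omega),
        if_neg (show ¬ TtV n m Mx K2 < tV n K by unfold tV TtV HV SV; omega),
        if_congr (show (tV n K2 < tV n K) ↔ (K < K2) by unfold tV; omega) rfl rfl]
    omega
  have f2 : cnt (EpL n m Mx K2 lx2) (TtV n m Mx K) = 2*m+2 + (if K2 < K then 1 else 0) := by
    unfold EpL
    rw [cnt_cons, cnt_cons,
        cnt_shift_hi hMx2 (show SV n m + Mx < TtV n m Mx K by unfold TtV HV; omega),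
        if_pos (show tV n K2 < TtV n m Mx K by unfold tV TtV HV SV; omega),
        if_congr (show (TtV n m Mx K2 < TtV n m Mx K) ↔ (K2 < K) by unfold TtV; omega) rfl rfl,
        hlx2]
    omega
  have f3 : NL (lx.map (fun w => SV n m + w)) (EpL n m Mx K2 lx2)
      = lx.length + NL lx lx2 := by
    unfold NL
    rw [List.map_map]
    have hcong : List.map (cnt (EpL n m Mx K2 lx2) ∘ fun w => SV n m + w) lx
        = List.map (fun w => 1 + cnt lx2 w) lx := by
      apply List.map_congr_left
      intro w hw
      have hwM := hMx w hw
      simp only [Function.comp_apply]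
      unfold EpL
      rw [cnt_cons, cnt_cons, cnt_shift_inner,
          if_pos (show tV n K2 < SV n m + w by unfold tV SV; omega),
          if_neg (show ¬ TtV n m Mx K2 < SV n m + w by unfold TtV HV; omega)]
      omega
    rw [hcong, sum_map_one_add]
  nth_rewrite 1 [EpL]
  rw [NL_cons, NL_cons, f1, f2, f3, hlx]
  have hsplit : (if K < K2 then 1 else 0) + (if K2 < K then 1 else 0) = 1 := by
    rcases Nat.lt_trichotomy K K2 with h | h | h
    · rw [if_pos h, if_neg (by omega)]
    · exact absurd h hne
    · rw [if_neg (by omega), if_pos h]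
  omega

end Lemmas
end
end DiceTournament

namespace DiceTournament
noncomputable section
open Classical

def KfD (n : ℕ) (p q : Prop) (xv : ℕ) : ℕ :=
  (if p then (if q then 2 else 1) else (if q then 3 else 0)) * n + xv

lemma KfD_lt (n : ℕ) (p q : Prop) (xv : ℕ) (hx : xv < n) : KfD n p q xv < 4*n := by
  unfold KfD; split_ifs <;> omega

lemma KfD_ge1 (n : ℕ) (p q : Prop) (xv : ℕ) (hx : xv < n) :
    (n ≤ KfD n p q xv) ↔ (p ∨ q) := by
  unfold KfD; split_ifs with h1 h2 h2 <;> simp [h1, h2] <;> omega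

lemma KfD_ge2 (n : ℕ) (p q : Prop) (xv : ℕ) (hx : xv < n) :
    (2*n ≤ KfD n p q xv) ↔ q := by
  unfold KfD; split_ifs with h1 h2 h2 <;> simp [h1, h2] <;> omega

lemma KfD_lt3 (n : ℕ) (p q : Prop) (xv : ℕ) (hx : xv < n) :
    (KfD n p q xv < 3*n) ↔ (p ∨ ¬ q) := by
  unfold KfD; split_ifs with h1 h2 h2 <;> simp [h1, h2] <;> omega

lemma KfD_inj (n : ℕ) (p1 q1 p2 q2 : Prop) (xv1 xv2 : ℕ) (hx1 : xv1 < n) (hx2 : xv2 < n)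
    (hne : xv1 ≠ xv2) : KfD n p1 q1 xv1 ≠ KfD n p2 q2 xv2 := by
  unfold KfD; split_ifs <;> omega

lemma step (n m : ℕ) (hn : 1 ≤ n) (T : Fin (n+2) → Fin (n+2) → Prop)
    (htot : ∀ i j : Fin (n+2), i ≠ j → (T i j ↔ ¬ T j i))
    (u v : Fin (n+2)) (hu : n ≤ u.val) (hv : n ≤ v.val) (huv : u ≠ v) (hTuv : T u v)
    (L : Fin n → List ℕ) (hlen : ∀ i, (L i).length = 2*m+1)
    (hreal : ∀ i j : Fin n, i ≠ j →
      (T (Fin.castLE (Nat.le_add_right n 2) i) (Fin.castLE (Nat.le_add_right n 2) j) ↔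
        2 * NL (L i) (L j) > (2*m+1)^2)) :
    ∃ L' : Fin (n+2) → List ℕ, (∀ i, (L' i).length = 2*m+3) ∧
      ∀ i j : Fin (n+2), i ≠ j → (T i j ↔ 2 * NL (L' i) (L' j) > (2*m+3)^2) := by
  classical
  set Mx := ∑ i : Fin n, (L i).sum with hMxdef
  have hMx : ∀ (x : Fin n), ∀ w ∈ L x, w ≤ Mx := by
    intro x w hw
    calc w ≤ (L x).sum := List.single_le_sum (fun _ _ => Nat.zero_le _) _ hw
    _ ≤ Mx := Finset.single_le_sum (f := fun i => (L i).sum)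
        (fun _ _ => Nat.zero_le _) (Finset.mem_univ x)
  set Kf : Fin n → ℕ := fun x =>
    KfD n (T u (Fin.castLE (Nat.le_add_right n 2) x)) (T v (Fin.castLE (Nat.le_add_right n 2) x))
      x.val with hKfdef
  have hKlt : ∀ x : Fin n, Kf x < 4*n := by
    intro x; simp only [hKfdef]; exact KfD_lt n _ _ _ x.isLt
  set L' : Fin (n+2) → List ℕ := fun z =>
    if hz : z.val < n then EpL n m Mx (Kf ⟨z.val, hz⟩) (L ⟨z.val, hz⟩)
    else if z = u then DuL n m Mx else DvL n m Mx with hL'def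
  have hL'old : ∀ (z : Fin (n+2)) (hz : z.val < n),
      L' z = EpL n m Mx (Kf ⟨z.val, hz⟩) (L ⟨z.val, hz⟩) := by
    intro z hz; simp only [hL'def]; rw [dif_pos hz]
  have hnu : ¬ u.val < n := by omega
  have hnv : ¬ v.val < n := by omega
  have hL'u : L' u = DuL n m Mx := by
    simp only [hL'def]; rw [dif_neg hnu]; simp
  have hL'v : L' v = DvL n m Mx := by
    simp only [hL'def]; rw [dif_neg hnv, if_neg (fun h => huv h.symm)]
  have huvval : u.val ≠ v.val := fun h => huv (Fin.ext h)
  have hval_uv : ∀ z : Fin (n+2), ¬ z.val < n → z = u ∨ z = v := by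
    intro z hz
    have hzlt := z.isLt
    have hult := u.isLt
    have hvlt := v.isLt
    rcases (show z.val = u.val ∨ z.val = v.val by omega) with h | h
    · exact Or.inl (Fin.ext h)
    · exact Or.inr (Fin.ext h)
  have hsq1 : (2*m+1)^2 = 4*(m*m)+4*m+1 := by ring
  have hsq3 : (2*m+3)^2 = 4*(m*m)+12*m+9 := by ring
  refine ⟨L', ?_, ?_⟩
  · intro z
    by_cases hz : z.val < n
    · rw [hL'old z hz, length_EpL, hlen]
    · rcases hval_uv z hz with rfl | rfl
      · rw [hL'u, length_DuL]
      · rw [hL'v, length_DvL]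
  · intro i j hij
    by_cases hi : i.val < n
    · have hieq : Fin.castLE (Nat.le_add_right n 2) (⟨i.val, hi⟩ : Fin n) = i := Fin.ext rfl
      by_cases hj : j.val < n
      · -- old vs old
        have hjeq : Fin.castLE (Nat.le_add_right n 2) (⟨j.val, hj⟩ : Fin n) = j := Fin.ext rfl
        have hvne : i.val ≠ j.val := fun h => hij (Fin.ext h)
        have hij' : (⟨i.val, hi⟩ : Fin n) ≠ ⟨j.val, hj⟩ := by
          intro h; rw [Fin.mk.injEq] at h; exact hvne h
        have hKne : Kf ⟨i.val, hi⟩ ≠ Kf ⟨j.val, hj⟩ := by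
          simp only [hKfdef]; exact KfD_inj n _ _ _ _ _ _ hi hj hvne
        rw [hL'old i hi, hL'old j hj,
          NL_Ep_Ep n m Mx _ _ _ _ (hKlt _) (hKlt _) hKne (hlen _) (hlen _) (hMx _) (hMx _)]
        have hiff := hreal ⟨i.val, hi⟩ ⟨j.val, hj⟩ hij'
        rw [hieq, hjeq] at hiff
        rw [hiff, hsq1, hsq3]
        constructor <;> intro <;> omega
      · -- old vs {u,v}
        rcases hval_uv j hj with h | h <;> rw [h] at hij ⊢
        · -- j = u
          rw [hL'old i hi, hL'u]
          have heq := NL_Ep_Du n m Mx (Kf ⟨i.val, hi⟩) (L ⟨i.val, hi⟩) (hKlt _) (hlen _) (hMx _)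
          have hg1 : (n ≤ Kf ⟨i.val, hi⟩) ↔ (T u i ∨ T v i) := by
            simp only [hKfdef]; rw [hieq]; exact KfD_ge1 n _ _ _ hi
          have hg3 : (Kf ⟨i.val, hi⟩ < 3*n) ↔ (T u i ∨ ¬ T v i) := by
            simp only [hKfdef]; rw [hieq]; exact KfD_lt3 n _ _ _ hi
          rw [htot i u hij, hsq3]
          by_cases hP1 : T u i
          · rw [if_pos (hg1.mpr (Or.inl hP1)), if_pos (hg3.mpr (Or.inl hP1))] at heq
            simp only [hP1, not_true_eq_false, false_iff, gt_iff_lt, not_lt]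
            omega
          · by_cases hP2 : T v i
            · rw [if_pos (hg1.mpr (Or.inr hP2)),
                if_neg (fun h => by rcases hg3.mp h with h' | h'; exacts [hP1 h', h' hP2])] at heq
              simp only [hP1, not_false_eq_true, true_iff, gt_iff_lt]
              omega
            · rw [if_neg (fun h => by rcases hg1.mp h with h' | h'; exacts [hP1 h', hP2 h']),
                if_pos (hg3.mpr (Or.inr hP2))] at heq
              simp only [hP1, not_false_eq_true, true_iff, gt_iff_lt]
              omega
        · -- j = v
          rw [hL'old i hi, hL'v]
          have heq := NL_Ep_Dv n m Mx (Kf ⟨i.val, hi⟩) (L ⟨i.val, hi⟩) (hKlt _) (hlen _) (hMx _)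
          have hg2 : (2*n ≤ Kf ⟨i.val, hi⟩) ↔ T v i := by
            simp only [hKfdef]; rw [hieq]; exact KfD_ge2 n _ _ _ hi
          rw [htot i v hij, hsq3]
          by_cases hP2 : T v i
          · rw [if_pos (hg2.mpr hP2)] at heq
            simp only [hP2, not_true_eq_false, false_iff, gt_iff_lt, not_lt]
            omega
          · rw [if_neg (fun h => hP2 (hg2.mp h))] at heq
            simp only [hP2, not_false_eq_true, true_iff, gt_iff_lt]
            omega
    · rcases hval_uv i hi with h | h <;> rw [h] at hij ⊢
      · -- i = u
        by_cases hj : j.val < n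
        · have hjeq : Fin.castLE (Nat.le_add_right n 2) (⟨j.val, hj⟩ : Fin n) = j := Fin.ext rfl
          rw [hL'u, hL'old j hj]
          have heq := NL_Du_Ep n m Mx (Kf ⟨j.val, hj⟩) (L ⟨j.val, hj⟩) (hKlt _) (hlen _) (hMx _)
          have hg1 : (n ≤ Kf ⟨j.val, hj⟩) ↔ (T u j ∨ T v j) := by
            simp only [hKfdef]; rw [hjeq]; exact KfD_ge1 n _ _ _ hj
          have hg3 : (Kf ⟨j.val, hj⟩ < 3*n) ↔ (T u j ∨ ¬ T v j) := by
            simp only [hKfdef]; rw [hjeq]; exact KfD_lt3 n _ _ _ hj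
          rw [hsq3]
          by_cases hP1 : T u j
          · rw [if_pos (hg1.mpr (Or.inl hP1)), if_pos (hg3.mpr (Or.inl hP1))] at heq
            simp only [hP1, true_iff, gt_iff_lt]
            omega
          · by_cases hP2 : T v j
            · rw [if_pos (hg1.mpr (Or.inr hP2)),
                if_neg (fun h => by rcases hg3.mp h with h' | h'; exacts [hP1 h', h' hP2])] at heq
              simp only [hP1, false_iff, gt_iff_lt, not_lt]
              omega
            · rw [if_neg (fun h => by rcases hg1.mp h with h' | h'; exacts [hP1 h', hP2 h']),
                if_pos (hg3.mpr (Or.inr hP2))] at heq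
              simp only [hP1, false_iff, gt_iff_lt, not_lt]
              omega
        · rcases hval_uv j hj with h | h <;> rw [h] at hij ⊢
          · exact absurd rfl hij
          · -- u vs v
            rw [hL'u, hL'v, NL_Du_Dv n m Mx hn, hsq3]
            exact iff_of_true hTuv (by omega)
      · -- i = v
        by_cases hj : j.val < n
        · have hjeq : Fin.castLE (Nat.le_add_right n 2) (⟨j.val, hj⟩ : Fin n) = j := Fin.ext rfl
          rw [hL'v, hL'old j hj]
          have heq := NL_Dv_Ep n m Mx (Kf ⟨j.val, hj⟩) (L ⟨j.val, hj⟩) (hKlt _) (hlen _) (hMx _)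
          have hg2 : (2*n ≤ Kf ⟨j.val, hj⟩) ↔ T v j := by
            simp only [hKfdef]; rw [hjeq]; exact KfD_ge2 n _ _ _ hj
          rw [hsq3]
          by_cases hP2 : T v j
          · rw [if_pos (hg2.mpr hP2)] at heq
            simp only [hP2, true_iff, gt_iff_lt]
            omega
          · rw [if_neg (fun h => hP2 (hg2.mp h))] at heq
            simp only [hP2, false_iff, gt_iff_lt, not_lt]
            omega
        · rcases hval_uv j hj with h | h <;> rw [h] at hij ⊢
          · -- v vs u
            rw [hL'v, hL'u, NL_Dv_Du n m Mx hn, hsq3]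
            exact iff_of_false ((htot u v huv).mp hTuv) (by omega)
          · exact absurd rfl hij

end
end DiceTournament

namespace DiceTournament
noncomputable section
open Classical

lemma buildDice : ∀ n : ℕ, 1 ≤ n → ∀ T : Fin n → Fin n → Prop,
    (∀ i j : Fin n, i ≠ j → (T i j ↔ ¬ T j i)) →
    ∃ m : ℕ, 2*m+1 ≤ n ∧ ∃ L : Fin n → List ℕ, (∀ i, (L i).length = 2*m+1) ∧
      ∀ i j : Fin n, i ≠ j → (T i j ↔ 2 * NL (L i) (L j) > (2*m+1)^2) := by
  intro n
  induction n using Nat.strong_induction_on with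
  | _ n ih =>
  intro hn T htot
  rcases Nat.lt_or_ge n 3 with h3 | h3
  · interval_cases n
    · -- n = 1
      refine ⟨0, by omega, fun _ => [0], fun _ => rfl, ?_⟩
      intro i j hij
      exact absurd (Subsingleton.elim i j) hij
    · -- n = 2
      refine ⟨0, by omega, fun i => if i.val = 0 then [if T 0 1 then 1 else 0]
        else [if T 0 1 then 0 else 1], fun i => by by_cases h : i.val = 0 <;> simp [h], ?_⟩
      intro i j hij
      have hv : i.val < 2 := i.isLt
      have hw : j.val < 2 := j.isLt
      have hvne : i.val ≠ j.val := fun h => hij (Fin.ext h)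
      rcases (show i.val = 0 ∧ j.val = 1 ∨ i.val = 1 ∧ j.val = 0 by omega) with ⟨h1, h2⟩ | ⟨h1, h2⟩
      · have hi0 : i = 0 := Fin.ext h1
        have hj1 : j = 1 := Fin.ext h2
        subst hi0; subst hj1
        by_cases hT : T 0 1 <;> simp [hT, NL, cnt]
      · have hi1 : i = 1 := Fin.ext h1
        have hj0 : j = 0 := Fin.ext h2
        subst hi1; subst hj0
        have h10 : T 1 0 ↔ ¬ T 0 1 := htot 1 0 hij
        rw [h10]
        by_cases hT : T 0 1 <;> simp [hT, NL, cnt]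
  · obtain ⟨k, rfl⟩ : ∃ k, n = k + 3 := ⟨n - 3, by omega⟩
    obtain ⟨m, hm, L, hlen, hreal⟩ := ih (k+1) (by omega) (by omega)
      (fun a b => T (Fin.castLE (Nat.le_add_right (k+1) 2) a) (Fin.castLE (Nat.le_add_right (k+1) 2) b))
      (fun i j hij => htot _ _ (fun h => hij (Fin.castLE_injective _ h)))
    have hne01 : (⟨k+1, by omega⟩ : Fin (k+3)) ≠ ⟨k+2, by omega⟩ := by
      intro h; rw [Fin.mk.injEq] at h; omega
    by_cases hT01 : T ⟨k+1, by omega⟩ ⟨k+2, by omega⟩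
    · obtain ⟨L', h1, h2⟩ := step (k+1) m (by omega) T htot ⟨k+1, by omega⟩ ⟨k+2, by omega⟩
        (le_refl _) (by norm_num) hne01 hT01 L hlen hreal
      refine ⟨m+1, by omega, L', ?_, ?_⟩
      · intro i; rw [show 2*(m+1)+1 = 2*m+3 by ring]; exact h1 i
      · intro i j hij; rw [show 2*(m+1)+1 = 2*m+3 by ring]; exact h2 i j hij
    · have hT10 : T ⟨k+2, by omega⟩ ⟨k+1, by omega⟩ := by
        by_contra hc
        exact hT01 ((htot _ _ hne01).mpr hc)
      obtain ⟨L', h1, h2⟩ := step (k+1) m (by omega) T htot ⟨k+2, by omega⟩ ⟨k+1, by omega⟩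
        (by norm_num) (le_refl _) (fun h => hne01 h.symm) hT10 L hlen hreal
      refine ⟨m+1, by omega, L', ?_, ?_⟩
      · intro i; rw [show 2*(m+1)+1 = 2*m+3 by ring]; exact h1 i
      · intro i j hij; rw [show 2*(m+1)+1 = 2*m+3 by ring]; exact h2 i j hij

end
end DiceTournament


/-- For every tournament `T` on `n ≥ 1` vertices there exist `0 < k ≤ n + 1` and a set of
`n` dice with `k` sides realizing `T`: `T i j` holds iff the number of face wins of die `i`
over die `j` exceeds `k²/2`. -/
theorem tournament_realized_by_dice (n : ℕ) (hn : 1 ≤ n)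
    (T : Fin n → Fin n → Prop)
    (hirr : ∀ i, ¬ T i i)
    (htot : ∀ i j : Fin n, i ≠ j → (T i j ↔ ¬ T j i)) :
    ∃ k : ℕ, 0 < k ∧ k ≤ n + 1 ∧ ∃ X : Fin n → Fin k → ℕ,
      ∀ i j : Fin n, i ≠ j → (T i j ↔ 2 * faceWins k (X i) (X j) > k ^ 2) := by
  classical
  obtain ⟨m, hm, L, hlen, hreal⟩ := DiceTournament.buildDice n hn T htot
  set X : Fin n → Fin (2*m+1) → ℕ :=
    fun i a => (L i)[a.val]'(by rw [hlen i]; exact a.isLt) with hX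
  refine ⟨2*m+1, by omega, by omega, X, ?_⟩
  intro i j hij
  have h1 : List.ofFn (X i) = L i := DiceTournament.ofFn_getElem (hlen i)
  have h2 : List.ofFn (X j) = L j := DiceTournament.ofFn_getElem (hlen j)
  rw [DiceTournament.faceWins_eq, h1, h2]
  exact hreal i j hij
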